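/- (Massart's lemma) Let T ⊆ ℝ^n be a finite set with B = max_{t∈T} ‖t‖_2, and let σ_1, …, σ_n be independent Rademacher variables. Then E_σ[max_{t∈T} Σ_{i=1}^n σ_i t_i] ≤ B √(2 log |T|). -/

import Mathlib

open Finset

private lemma sum_bool_prod {n : ℕ} (g : Fin n → Bool → ℝ) :
    ∑ σ : Fin n → Bool, ∏ i, g i (σ i) = ∏ i, (g i true + g i false) := by
  rw [← Fintype.prod_sum g]
  exact Finset.prod_congr rfl fun i _ => by rw [Fintype.sum_bool]

private lemma key_ineq (n : ℕ) (T : Finset (Fin n → ℝ)) (hT : T.Nonempty) (B : ℝ)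
    (hB : ∀ t ∈ T, Real.sqrt (∑ i : Fin n, (t i) ^ 2) ≤ B) (l : ℝ) :
    l * ((∑ σ : Fin n → Bool,
        T.sup' hT fun t => ∑ i : Fin n, (if σ i then (1 : ℝ) else -1) * t i) / 2 ^ n)
      ≤ Real.log T.card + l ^ 2 * B ^ 2 / 2 := by
  set M : (Fin n → Bool) → ℝ :=
    fun σ => T.sup' hT fun t => ∑ i : Fin n, (if σ i then (1 : ℝ) else -1) * t i with hM
  have h2n : (0:ℝ) < 2 ^ n := by positivity
  have hcard : (Fintype.card (Fin n → Bool) : ℝ) = 2 ^ n := by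
    simp [Fintype.card_fun]
  -- Jensen
  have jensen : Real.exp (l * ((∑ σ, M σ) / 2 ^ n))
      ≤ (∑ σ, Real.exp (l * M σ)) / 2 ^ n := by
    have hw1 : ∑ _σ : Fin n → Bool, ((2:ℝ) ^ n)⁻¹ = 1 := by
      rw [Finset.sum_const, Finset.card_univ, nsmul_eq_mul, hcard]
      field_simp
    have hmain := convexOn_exp.map_sum_le (t := (univ : Finset (Fin n → Bool)))
      (w := fun _ => ((2:ℝ) ^ n)⁻¹) (p := fun σ => l * M σ)
      (fun _ _ => by positivity) hw1 (fun _ _ => Set.mem_univ _)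
    calc Real.exp (l * ((∑ σ, M σ) / 2 ^ n))
        = Real.exp (∑ σ, ((2:ℝ) ^ n)⁻¹ • (l * M σ)) := by
          congr 1
          simp only [smul_eq_mul, ← Finset.mul_sum]
          ring
      _ ≤ ∑ σ, ((2:ℝ) ^ n)⁻¹ * Real.exp (l * M σ) := hmain
      _ = (∑ σ, Real.exp (l * M σ)) / 2 ^ n := by
          rw [← Finset.mul_sum]; field_simp
  -- bound exp of max by sum of exps
  have step2 : ∀ σ : Fin n → Bool, Real.exp (l * M σ)
      ≤ ∑ t ∈ T, Real.exp (l * ∑ i, (if σ i then (1:ℝ) else -1) * t i) := by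
    intro σ
    obtain ⟨t₀, ht₀, hEq⟩ := Finset.exists_mem_eq_sup' hT
      (fun t => ∑ i : Fin n, (if σ i then (1 : ℝ) else -1) * t i)
    rw [hM]
    simp only
    rw [hEq]
    apply Finset.single_le_sum
      (f := fun t => Real.exp (l * ∑ i, (if σ i then (1:ℝ) else -1) * t i))
      (fun t _ => (Real.exp_pos _).le) ht₀
  -- factorize and bound with cosh
  have step3 : ∀ t ∈ T, (∑ σ : Fin n → Bool,
      Real.exp (l * ∑ i, (if σ i then (1:ℝ) else -1) * t i))
      ≤ 2 ^ n * Real.exp (l ^ 2 * B ^ 2 / 2) := by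
    intro t ht
    set g : Fin n → Bool → ℝ :=
      fun i b => Real.exp (l * ((if b then (1:ℝ) else -1) * t i)) with hg
    have hfac : (∑ σ : Fin n → Bool,
        Real.exp (l * ∑ i, (if σ i then (1:ℝ) else -1) * t i))
        = ∏ i, (2 * Real.cosh (l * t i)) := by
      have h1 : ∀ σ : Fin n → Bool,
          Real.exp (l * ∑ i, (if σ i then (1:ℝ) else -1) * t i) = ∏ i, g i (σ i) := by
        intro σ
        rw [Finset.mul_sum, Real.exp_sum]
      calc (∑ σ : Fin n → Bool,
            Real.exp (l * ∑ i, (if σ i then (1:ℝ) else -1) * t i))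
          = ∑ σ : Fin n → Bool, ∏ i, g i (σ i) :=
            Finset.sum_congr rfl fun σ _ => h1 σ
        _ = ∏ i, (g i true + g i false) := sum_bool_prod g
        _ = ∏ i, (2 * Real.cosh (l * t i)) := by
            refine Finset.prod_congr rfl fun i _ => ?_
            rw [hg, Real.cosh_eq]
            norm_num
            ring
    rw [hfac]
    have hsum : ∑ i, t i ^ 2 ≤ B ^ 2 := by
      have h2 : (0:ℝ) ≤ ∑ i, t i ^ 2 := by positivity
      calc ∑ i, t i ^ 2 = Real.sqrt (∑ i, t i ^ 2) ^ 2 := (Real.sq_sqrt h2).symm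
        _ ≤ B ^ 2 := pow_le_pow_left₀ (Real.sqrt_nonneg _) (hB t ht) 2
    calc ∏ i, (2 * Real.cosh (l * t i))
        = 2 ^ n * ∏ i, Real.cosh (l * t i) := by
          rw [Finset.prod_mul_distrib]; simp
      _ ≤ 2 ^ n * ∏ i, Real.exp ((l * t i) ^ 2 / 2) := by
          refine mul_le_mul_of_nonneg_left ?_ (by positivity)
          exact Finset.prod_le_prod (fun i _ => (Real.cosh_pos _).le)
            (fun i _ => Real.cosh_le_exp_half_sq _)
      _ = 2 ^ n * Real.exp (∑ i, (l * t i) ^ 2 / 2) := by rw [Real.exp_sum]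
      _ ≤ 2 ^ n * Real.exp (l ^ 2 * B ^ 2 / 2) := by
          refine mul_le_mul_of_nonneg_left (Real.exp_le_exp.mpr ?_) (by positivity)
          rw [← Finset.sum_div]
          gcongr
          calc ∑ i, (l * t i) ^ 2 = l ^ 2 * ∑ i, t i ^ 2 := by
                rw [Finset.mul_sum]; exact Finset.sum_congr rfl fun i _ => by ring
            _ ≤ l ^ 2 * B ^ 2 := mul_le_mul_of_nonneg_left hsum (sq_nonneg l)
  -- combine
  have total : Real.exp (l * ((∑ σ, M σ) / 2 ^ n))
      ≤ T.card * Real.exp (l ^ 2 * B ^ 2 / 2) := by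
    refine jensen.trans ?_
    rw [div_le_iff₀ h2n]
    calc (∑ σ, Real.exp (l * M σ))
        ≤ ∑ σ : Fin n → Bool, ∑ t ∈ T,
            Real.exp (l * ∑ i, (if σ i then (1:ℝ) else -1) * t i) :=
          Finset.sum_le_sum fun σ _ => step2 σ
      _ = ∑ t ∈ T, ∑ σ : Fin n → Bool,
            Real.exp (l * ∑ i, (if σ i then (1:ℝ) else -1) * t i) := Finset.sum_comm
      _ ≤ ∑ t ∈ T, 2 ^ n * Real.exp (l ^ 2 * B ^ 2 / 2) :=
          Finset.sum_le_sum step3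
      _ = T.card * Real.exp (l ^ 2 * B ^ 2 / 2) * 2 ^ n := by
          rw [Finset.sum_const, nsmul_eq_mul]; ring
  have hNpos : (0:ℝ) < T.card := by
    exact_mod_cast Finset.card_pos.mpr hT
  have hlog := Real.log_le_log (Real.exp_pos _) total
  rwa [Real.log_exp, Real.log_mul hNpos.ne' (Real.exp_pos _).ne', Real.log_exp] at hlog

theorem stmt7 (n : ℕ) (T : Finset (Fin n → ℝ)) (hT : T.Nonempty) (B : ℝ)
    (hB : B = T.sup' hT fun t => Real.sqrt (∑ i : Fin n, (t i) ^ 2)) :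
    (∑ σ : Fin n → Bool,
        T.sup' hT fun t => ∑ i : Fin n, (if σ i then (1 : ℝ) else -1) * t i) / 2 ^ n
      ≤ B * Real.sqrt (2 * Real.log T.card) := by
  have hB' : ∀ t ∈ T, Real.sqrt (∑ i : Fin n, (t i) ^ 2) ≤ B := by
    intro t ht
    rw [hB]
    apply Finset.le_sup' (f := fun t => Real.sqrt (∑ i : Fin n, (t i) ^ 2)) ht
  have key := key_ineq n T hT B hB'
  have hBnn : 0 ≤ B := by
    obtain ⟨t, ht⟩ := hT
    exact le_trans (Real.sqrt_nonneg _) (hB' t ht)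
  set E : ℝ := (∑ σ : Fin n → Bool,
      T.sup' hT fun t => ∑ i : Fin n, (if σ i then (1 : ℝ) else -1) * t i) / 2 ^ n with hE
  have hNpos : (0:ℝ) < T.card := by exact_mod_cast Finset.card_pos.mpr hT
  have hL : 0 ≤ Real.log T.card := Real.log_nonneg (by exact_mod_cast hT.card_pos)
  set L : ℝ := Real.log T.card with hLdef
  rcases eq_or_lt_of_le hL with hL0 | hLpos
  · have hR : B * Real.sqrt (2 * L) = 0 := by rw [← hL0]; simp
    rw [hR]
    rcases eq_or_lt_of_le hBnn with hB0 | hBpos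
    · have h1 := key 1
      rw [← hL0, ← hB0] at h1
      simpa using h1
    · refine le_of_forall_pos_le_add fun ε hε => ?_
      have hl : 0 < 2 * ε / B ^ 2 := by positivity
      have hk := key (2 * ε / B ^ 2)
      rw [← hL0] at hk
      have h2 : (2 * ε / B ^ 2) * E ≤ (2 * ε / B ^ 2) * ε := by
        calc (2 * ε / B ^ 2) * E ≤ 0 + (2 * ε / B ^ 2) ^ 2 * B ^ 2 / 2 := hk
          _ = (2 * ε / B ^ 2) * ε := by field_simp; ring
      have := le_of_mul_le_mul_left h2 hl
      linarith
  · rcases eq_or_lt_of_le hBnn with hB0 | hBpos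
    · have hRnn : 0 ≤ B * Real.sqrt (2 * L) := by rw [← hB0]; simp
      refine le_trans ?_ hRnn
      refine le_of_forall_pos_le_add fun ε hε => ?_
      have hl : 0 < L / ε := by positivity
      have hk := key (L / ε)
      rw [← hB0] at hk
      have h2 : (L / ε) * E ≤ (L / ε) * ε := by
        calc (L / ε) * E ≤ L + (L / ε) ^ 2 * 0 ^ 2 / 2 := hk
          _ = (L / ε) * ε := by field_simp; ring
      have := le_of_mul_le_mul_left h2 hl
      linarith
    · have hs : 0 < Real.sqrt (2 * L) := Real.sqrt_pos.mpr (by linarith)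
      set l : ℝ := Real.sqrt (2 * L) / B with hl
      have hlpos : 0 < l := by positivity
      have hkey := key l
      have h2L : Real.sqrt (2 * L) * Real.sqrt (2 * L) = 2 * L :=
        Real.mul_self_sqrt (by linarith)
      have hsq : l ^ 2 * B ^ 2 = 2 * L := by
        rw [hl, div_pow, div_mul_cancel₀]
        · rw [sq, h2L]
        · positivity
      have h2 : l * E ≤ 2 * L := by rw [hsq] at hkey; linarith
      have hEs : E ≤ 2 * L / l := by rw [le_div_iff₀ hlpos]; linarith
      refine hEs.trans ?_
      rw [hl, div_div_eq_mul_div, div_le_iff₀ hs]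
      nlinarith [h2L, hBnn]
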